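/- For every integer r ≥ 1, the Bell number B_r satisfies B_r < (0.792·r / ln(r+1))^r. -/

import Mathlib

open Finset

namespace BellDev

def setoidCongr {α β : Type*} (e : α ≃ β) : Setoid α ≃ Setoid β where
  toFun s := s.comap e.symm
  invFun s := s.comap e
  left_inv s := Setoid.ext fun x y => by simp [Setoid.comap_rel]
  right_inv s := Setoid.ext fun x y => by simp [Setoid.comap_rel]

instance {α : Type*} [Finite α] : Finite (Setoid α) := by
  classical
  exact Finite.of_injective (fun s : Setoid α => (fun x y => s x y : α → α → Prop))
    (fun s t h => Setoid.ext fun x y => by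
      have := congrFun (congrFun h x) y
      simp only at this
      rw [this])

end BellDev

namespace BellDev
open scoped Classical

/-- The map used to build a setoid on `Option α` from a block `S` (glued with `none`)
and a setoid on the complement. -/
noncomputable def glue {α : Type*} (S : Finset α) (t : Setoid {a : α // a ∉ S}) :
    Option α → Option (Quotient t) :=
  fun x => match x with
    | none => none
    | some a => if h : a ∈ S then none else some (Quotient.mk t ⟨a, h⟩)

lemma sigma_setoid_ext {α : Type*} {S S' : Finset α}
    (h : S = S') {t : Setoid {a : α // a ∉ S}} {t' : Setoid {a : α // a ∉ S'}}
    (hr : ∀ (a b : α) (ha : a ∉ S) (hb : b ∉ S) (ha' : a ∉ S') (hb' : b ∉ S'),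
      t ⟨a, ha⟩ ⟨b, hb⟩ ↔ t' ⟨a, ha'⟩ ⟨b, hb'⟩) :
    (⟨S, t⟩ : Σ S : Finset α, Setoid {a : α // a ∉ S}) = ⟨S', t'⟩ := by
  subst h
  have : t = t' := Setoid.ext fun x y => by
    obtain ⟨a, ha⟩ := x; obtain ⟨b, hb⟩ := y; exact hr a b ha hb ha hb
  rw [this]

noncomputable def optionEquiv (α : Type*) [Fintype α] :
    Setoid (Option α) ≃ Σ S : Finset α, Setoid {a : α // a ∉ S} where
  toFun s := ⟨univ.filter (fun a => s (some a) none), s.comap (fun x => some x.val)⟩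
  invFun p := Setoid.ker (glue p.1 p.2)
  left_inv s := by
    have hmem : ∀ a : α, a ∈ univ.filter (fun a => s (some a) none) ↔ s (some a) none := by
      intro a; simp
    refine Setoid.ext fun x y => ?_
    rw [Setoid.ker_def]
    match x, y with
    | none, none => simpa [glue] using s.refl (none : Option α)
    | none, some b =>
      simp only [glue]
      by_cases hb : b ∈ univ.filter (fun a => s (some a) none)
      · rw [dif_pos hb]
        simpa using s.symm ((hmem b).1 hb)
      · rw [dif_neg hb]
        rw [hmem] at hb
        exact iff_of_false (by simp) (fun h => hb (s.symm h))
    | some a, none =>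
      simp only [glue]
      by_cases ha : a ∈ univ.filter (fun a => s (some a) none)
      · rw [dif_pos ha]
        simpa using (hmem a).1 ha
      · rw [dif_neg ha]
        rw [hmem] at ha
        exact iff_of_false (by simp) ha
    | some a, some b =>
      simp only [glue]
      by_cases ha : a ∈ univ.filter (fun a => s (some a) none) <;>
        by_cases hb : b ∈ univ.filter (fun a => s (some a) none)
      · rw [dif_pos ha, dif_pos hb]
        rw [hmem] at ha hb
        exact iff_of_true rfl (s.trans ha (s.symm hb))
      · rw [dif_pos ha, dif_neg hb]
        rw [hmem] at ha hb
        exact iff_of_false (by simp) (fun h => hb (s.trans (s.symm h) ha))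
      · rw [dif_neg ha, dif_pos hb]
        rw [hmem] at ha hb
        exact iff_of_false (by simp) (fun h => ha (s.trans h hb))
      · rw [dif_neg ha, dif_neg hb]
        rw [hmem] at ha hb
        rw [Option.some_inj, Quotient.eq]
        exact Setoid.comap_rel _ _ _ _
  right_inv p := by
    obtain ⟨S, t⟩ := p
    have hS : univ.filter (fun a => Setoid.ker (glue S t) (some a) none) = S := by
      ext a
      simp only [mem_filter, mem_univ, true_and, Setoid.ker_def, glue]
      by_cases h : a ∈ S
      · rw [dif_pos h]; simpa using h
      · rw [dif_neg h]; simpa using h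
    refine sigma_setoid_ext hS ?_
    intro a b ha hb ha' hb'
    show Setoid.ker (glue S t) (some a) (some b) ↔ _
    rw [Setoid.ker_def]
    simp only [glue]
    rw [dif_neg hb', dif_neg ha'] -- order?
    rw [Option.some_inj, Quotient.eq]

end BellDev

/-- The `n`-th Bell number: the number of equivalence relations (partitions)
on a set with `n` elements. -/
noncomputable def bell (n : ℕ) : ℕ := Nat.card (Setoid (Fin n))

namespace BellDev

lemma card_setoid_eq_bell {α : Type*} [Fintype α] :
    Nat.card (Setoid α) = bell (Fintype.card α) :=
  Nat.card_congr (setoidCongr (Fintype.equivFin α))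

lemma bell_zero : bell 0 = 1 := by
  haveI : Subsingleton (Setoid (Fin 0)) := ⟨fun a b => Setoid.ext fun x y => x.elim0⟩
  haveI : Unique (Setoid (Fin 0)) := uniqueOfSubsingleton ⊤
  exact Nat.card_unique

lemma bell_succ (n : ℕ) : bell (n + 1) = ∑ k ∈ Finset.range (n + 1), n.choose k * bell k := by
  classical
  have h1 : bell (n + 1) = Nat.card (Σ S : Finset (Fin n), Setoid {a : Fin n // a ∉ S}) :=
    Nat.card_congr ((setoidCongr (finSuccEquiv n)).trans (optionEquiv (Fin n)))
  letI : ∀ S : Finset (Fin n), Fintype (Setoid {a : Fin n // a ∉ S}) :=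
    fun S => Fintype.ofFinite _
  rw [h1, Nat.card_eq_fintype_card, Fintype.card_sigma]
  have h2 : ∀ S : Finset (Fin n),
      Fintype.card (Setoid {a : Fin n // a ∉ S}) = bell (n - S.card) := by
    intro S
    rw [← Nat.card_eq_fintype_card, card_setoid_eq_bell]
    congr 1
    rw [Fintype.card_subtype_compl]
    simp [Fintype.card_coe]
  calc ∑ S : Finset (Fin n), Fintype.card (Setoid {a : Fin n // a ∉ S})
      = ∑ S ∈ (univ : Finset (Fin n)).powerset, bell (n - S.card) := by
        rw [Finset.powerset_univ]; exact Finset.sum_congr rfl fun S _ => h2 S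
    _ = ∑ k ∈ Finset.range (n + 1), n.choose k * bell (n - k) := by
        rw [Finset.sum_powerset_apply_card (fun k => bell (n - k))]
        simp [Finset.card_univ]
    _ = ∑ k ∈ Finset.range (n + 1), n.choose k * bell k := by
        rw [← Finset.sum_range_reflect]
        refine Finset.sum_congr rfl fun k hk => ?_
        rw [Finset.mem_range, Nat.lt_succ_iff] at hk
        simp only [Nat.add_sub_cancel]
        rw [Nat.sub_sub_self hk, Nat.choose_symm hk]

end BellDev

namespace BellDev

instance {α : Type*} [Finite α] : Finite (Setoid α) := by
  classical
  exact Finite.of_injective (fun s : Setoid α => (fun x y => s x y : α → α → Prop))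
    (fun s t h => Setoid.ext fun x y => by
      have := congrFun (congrFun h x) y
      simp only at this
      rw [this])

/-- number of setoids on `Fin n` whose quotient has exactly `k` elements -/
noncomputable def cardk (n k : ℕ) : ℕ :=
  Nat.card {σ : Setoid (Fin n) // Nat.card (Quotient σ) = k}

lemma cardk_mul_factorial_le (n k : ℕ) : cardk n k * k.factorial ≤ k ^ n := by
  classical
  letI : ∀ σ : Setoid (Fin n), Fintype (Quotient σ) := fun σ => Fintype.ofFinite _
  -- the chosen enumeration of classes
  have he : ∀ σ : {σ : Setoid (Fin n) // Nat.card (Quotient σ) = k},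
      Fintype.card (Quotient σ.1) = k := by
    intro σ; rw [← Nat.card_eq_fintype_card]; exact σ.2
  let e : ∀ σ : {σ : Setoid (Fin n) // Nat.card (Quotient σ) = k},
      Quotient σ.1 ≃ Fin k := fun σ => Fintype.equivFinOfCardEq (he σ)
  let Φ : {σ : Setoid (Fin n) // Nat.card (Quotient σ) = k} × Equiv.Perm (Fin k) →
      (Fin n → Fin k) := fun p i => p.2 (e p.1 (Quotient.mk p.1.1 i))
  have hΦ : Function.Injective Φ := by
    rintro ⟨σ, π⟩ ⟨σ', π'⟩ h
    have h' : ∀ i, π (e σ (Quotient.mk σ.1 i)) = π' (e σ' (Quotient.mk σ'.1 i)) :=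
      fun i => congrFun h i
    have hσ : σ.1 = σ'.1 := by
      refine Setoid.ext fun x y => ?_
      constructor
      · intro hxy
        have : Quotient.mk σ.1 x = Quotient.mk σ.1 y := Quotient.sound hxy
        have h2 : π' (e σ' (Quotient.mk σ'.1 x)) = π' (e σ' (Quotient.mk σ'.1 y)) := by
          rw [← h', ← h', this]
        exact Quotient.exact ((e σ').injective (π'.injective h2))
      · intro hxy
        have : Quotient.mk σ'.1 x = Quotient.mk σ'.1 y := Quotient.sound hxy
        have h2 : π (e σ (Quotient.mk σ.1 x)) = π (e σ (Quotient.mk σ.1 y)) := by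
          rw [h', h', this]
        exact Quotient.exact ((e σ).injective (π.injective h2))
    have hσ' : σ = σ' := Subtype.ext hσ
    subst hσ'
    have hπ : π = π' := by
      refine Equiv.ext fun j => ?_
      obtain ⟨q, hq⟩ := (e σ).surjective j
      obtain ⟨i, hi⟩ := Quotient.exists_rep q
      rw [← hq, ← hi]
      exact h' i
    rw [hπ]
  have := Nat.card_le_card_of_injective Φ hΦ
  rwa [Nat.card_prod, Nat.card_eq_fintype_card (α := Equiv.Perm (Fin k)),
    Fintype.card_perm, Fintype.card_fin, Nat.card_fun, Nat.card_eq_fintype_card (α := Fin k),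
    Nat.card_eq_fintype_card (α := Fin n), Fintype.card_fin, Fintype.card_fin] at this

lemma bell_eq_sum_cardk (n : ℕ) :
    bell n = ∑ k ∈ Finset.range (n + 1), cardk n k := by
  classical
  letI : Fintype (Setoid (Fin n)) := Fintype.ofFinite _
  have hle : ∀ σ : Setoid (Fin n), Nat.card (Quotient σ) ≤ n := by
    intro σ
    have := Nat.card_le_card_of_surjective (Quotient.mk σ) Quotient.mk_surjective
    simpa using this
  rw [show bell n = Fintype.card (Setoid (Fin n)) from Nat.card_eq_fintype_card]
  rw [← Finset.card_univ,
    Finset.card_eq_sum_card_fiberwise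
      (f := fun σ : Setoid (Fin n) => Nat.card (Quotient σ)) (t := Finset.range (n+1))
      (fun σ _ => Finset.mem_range.2 (Nat.lt_succ_of_le (hle σ)))]
  refine Finset.sum_congr rfl fun k _ => ?_
  rw [cardk, Nat.card_eq_fintype_card, Fintype.card_subtype]

end BellDev


namespace BellDev

-- generic tangent-line bound: for k ≥ 1 (nat), c > 0 : (k:ℝ)^n ≤ (c/e)^n * exp ((n/c) * k)
lemma pow_le_aux {c : ℝ} (hc : 0 < c) (n k : ℕ) (hn : 1 ≤ n) :
    (k : ℝ) ^ n ≤ (c / Real.exp 1) ^ n * Real.exp ((n / c) * k) := by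
  rcases Nat.eq_zero_or_pos k with hk | hk
  · subst hk
    simp only [Nat.cast_zero]
    rw [zero_pow (by omega)]
    positivity
  · have hk0 : (0:ℝ) < k := by exact_mod_cast hk
    have hlog : Real.log k ≤ k / c - 1 + Real.log c := by
      have h1 : Real.log (k / c) ≤ k / c - 1 := Real.log_le_sub_one_of_pos (by positivity)
      rw [Real.log_div (ne_of_gt hk0) (ne_of_gt hc)] at h1
      linarith
    have h2 : (k:ℝ) ^ n = Real.exp ((n:ℝ) * Real.log k) := by
      rw [Real.exp_nat_mul, Real.exp_log hk0]
    rw [h2]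
    have h3 : (c / Real.exp 1) ^ n * Real.exp ((n / c) * k) =
        Real.exp ((n:ℝ) * (Real.log c - 1) + (n / c) * k) := by
      rw [Real.exp_add, Real.exp_nat_mul]
      congr 2
      rw [Real.exp_sub, Real.exp_log hc]
    rw [h3]
    rw [Real.exp_le_exp]
    have h4 := mul_le_mul_of_nonneg_left hlog (by positivity : (0:ℝ) ≤ (n:ℝ))
    have h5 : (n:ℝ) * ((k:ℝ) / c) = (n:ℝ) / c * k := by ring
    have h6 : (n:ℝ) * ((k:ℝ) / c - 1 + Real.log c) = (n:ℝ)*((k:ℝ)/c) - n + n * Real.log c := by ring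
    linarith

end BellDev

namespace BellDev

lemma sum_bound {c : ℝ} (hc : 0 < c) (n : ℕ) (hn : 1 ≤ n) :
    ∑ k ∈ range (n+1), (k:ℝ)^n / (Nat.factorial k) ≤
      (c / Real.exp 1) ^ n * Real.exp (Real.exp ((n:ℝ)/c)) := by
  have step : ∀ k ∈ range (n+1), (k:ℝ)^n / (Nat.factorial k) ≤
      (c / Real.exp 1) ^ n * (Real.exp ((n:ℝ)/c))^k / (Nat.factorial k) := by
    intro k _
    have h1 := pow_le_aux hc n k hn
    have h2 : Real.exp ((n:ℝ)/c * k) = (Real.exp ((n:ℝ)/c))^k := by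
      rw [← Real.exp_nat_mul]; ring_nf
    rw [h2] at h1
    exact div_le_div_of_nonneg_right h1 (by positivity)
  calc ∑ k ∈ range (n+1), (k:ℝ)^n / (Nat.factorial k)
      ≤ ∑ k ∈ range (n+1), (c / Real.exp 1) ^ n * (Real.exp ((n:ℝ)/c))^k / (Nat.factorial k) :=
        Finset.sum_le_sum step
    _ = (c / Real.exp 1) ^ n * ∑ k ∈ range (n+1), (Real.exp ((n:ℝ)/c))^k / (Nat.factorial k) := by
        rw [Finset.mul_sum]; exact Finset.sum_congr rfl fun k _ => by ring
    _ ≤ (c / Real.exp 1) ^ n * Real.exp (Real.exp ((n:ℝ)/c)) := by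
        have := Real.sum_le_exp_of_nonneg (x := Real.exp ((n:ℝ)/c)) (Real.exp_pos _).le (n+1)
        exact mul_le_mul_of_nonneg_left this (by positivity)

lemma exp_043 : Real.exp 0.43 < 1.5374 := by
  have e1 : Real.exp 1 < 2.7182818286 := Real.exp_one_lt_d9
  have a1 : Real.exp 0.43 ^ (100:ℕ) = Real.exp 43 := by
    rw [← Real.exp_nat_mul]; norm_num
  have a2 : Real.exp 43 = Real.exp 1 ^ (43:ℕ) := by
    rw [← Real.exp_nat_mul]; norm_num
  have a3 : Real.exp 1 ^ (43:ℕ) < 2.7182818286^(43:ℕ) :=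
    pow_lt_pow_left₀ e1 (Real.exp_pos _).le (by norm_num)
  have a4 : (2.7182818286:ℝ)^(43:ℕ) < 1.5374^(100:ℕ) := by norm_num
  refine lt_of_pow_lt_pow_left₀ 100 (by norm_num) ?_
  rw [a1, a2]; linarith

lemma rpow_57_le {n : ℕ} (hn : 23 ≤ n) : ((n:ℝ)+1) ^ ((5:ℝ)/7) ≤ 0.43 * n := by
  have hn1 : (23:ℝ) ≤ n := by exact_mod_cast hn
  have hb : (0:ℝ) ≤ 0.43 * n := by positivity
  have ha : (0:ℝ) ≤ ((n:ℝ)+1) ^ ((5:ℝ)/7) := Real.rpow_nonneg (by positivity) _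
  refine le_of_pow_le_pow_left₀ (n := 7) (by norm_num) hb ?_
  have h7 : (((n:ℝ)+1) ^ ((5:ℝ)/7)) ^ (7:ℕ) = ((n:ℝ)+1) ^ (5:ℕ) := by
    rw [← Real.rpow_natCast (((n:ℝ)+1) ^ ((5:ℝ)/7)) 7, ← Real.rpow_mul (by positivity),
      show ((5:ℝ)/7)*((7:ℕ):ℝ) = ((5:ℕ):ℝ) by norm_num, Real.rpow_natCast]
  rw [h7]
  have key : ((n:ℝ)+1) ≤ 24/23 * n := by linarith
  calc ((n:ℝ)+1) ^ (5:ℕ) ≤ (24/23 * n) ^ (5:ℕ) := pow_le_pow_left₀ (by positivity) key 5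
    _ = (24/23:ℝ)^(5:ℕ) * n^(5:ℕ) := by ring
    _ ≤ (0.43:ℝ)^(7:ℕ) * 529 * n^(5:ℕ) := by
        have : ((24:ℝ)/23)^(5:ℕ) ≤ (0.43:ℝ)^(7:ℕ) * 529 := by norm_num
        nlinarith [pow_nonneg (by positivity : (0:ℝ) ≤ (n:ℝ)) 5]
    _ ≤ (0.43:ℝ)^(7:ℕ) * n^(2:ℕ) * n^(5:ℕ) := by
        have h529 : (529:ℝ) ≤ n^(2:ℕ) := by nlinarith
        nlinarith [pow_nonneg (by positivity : (0:ℝ) ≤ (n:ℝ)) 5, pow_pos (by norm_num : (0:ℝ) < 0.43) 7]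
    _ = (0.43 * n) ^ (7:ℕ) := by ring

lemma tail_bound (n : ℕ) (hn : 23 ≤ n) :
    ∑ k ∈ range (n+1), (k:ℝ)^n / (Nat.factorial k) <
      (0.792 * n / Real.log (n+1)) ^ n := by
  have hn1 : (1:ℕ) ≤ n := by omega
  have hnR : (23:ℝ) ≤ n := by exact_mod_cast hn
  set L := Real.log ((n:ℝ)+1) with hLdef
  have hL : 0 < L := Real.log_pos (by linarith)
  set c : ℝ := 7/5 * n / L with hcdef
  have hc : 0 < c := by positivity
  have hnc : (n:ℝ) / c = 5/7 * L := by
    rw [hcdef]; field_simp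
  have hexp : Real.exp ((n:ℝ)/c) ≤ 0.43 * n := by
    rw [hnc]
    have : Real.exp (5/7 * L) = ((n:ℝ)+1) ^ ((5:ℝ)/7) := by
      rw [Real.rpow_def_of_pos (by positivity), hLdef]; ring_nf
    rw [this]
    exact rpow_57_le hn
  have h043 : (1.4:ℝ) * Real.exp 0.43 < 0.792 * Real.exp 1 := by
    have := exp_043
    have e2 : (2.7182818283:ℝ) < Real.exp 1 := Real.exp_one_gt_d9
    nlinarith
  calc ∑ k ∈ range (n+1), (k:ℝ)^n / (Nat.factorial k)
      ≤ (c / Real.exp 1) ^ n * Real.exp (Real.exp ((n:ℝ)/c)) := sum_bound hc n hn1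
    _ ≤ (c / Real.exp 1) ^ n * Real.exp (0.43 * n) := by
        have := Real.exp_le_exp.2 hexp
        exact mul_le_mul_of_nonneg_left this (by positivity)
    _ = (c / Real.exp 1) ^ n * (Real.exp 0.43) ^ n := by
        rw [← Real.exp_nat_mul]; ring_nf
    _ < (c / Real.exp 1) ^ n * (0.792 * Real.exp 1 / 1.4) ^ n := by
        have hbase : Real.exp 0.43 < 0.792 * Real.exp 1 / 1.4 := by
          rw [lt_div_iff₀ (by norm_num)]; linarith
        exact mul_lt_mul_of_pos_left
          (pow_lt_pow_left₀ hbase (Real.exp_pos _).le (by omega))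
          (by positivity)
    _ = (0.792 * n / L) ^ n := by
        rw [← mul_pow]
        congr 1
        have he : Real.exp 1 ≠ 0 := (Real.exp_pos _).ne'
        rw [hcdef]
        field_simp
        ring

end BellDev


namespace BellDev

lemma log_lt {x : ℝ} (hx : 1 ≤ x) {p q : ℕ} (hq : 0 < q)
    (h : x ^ q < (2.7182818283:ℝ) ^ p) : Real.log x < (p:ℝ)/(q:ℝ) := by
  have hx0 : 0 < x := by linarith
  rw [Real.log_lt_iff_lt_exp hx0]
  have h2 : (2.7182818283:ℝ) ^ p ≤ Real.exp 1 ^ p :=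
    pow_le_pow_left₀ (by norm_num) Real.exp_one_gt_d9.le p
  have h3 : Real.exp 1 ^ p = Real.exp ((p:ℝ)/(q:ℝ)) ^ q := by
    rw [← Real.exp_nat_mul, ← Real.exp_nat_mul]
    congr 1
    field_simp
  have h4 : x ^ q < Real.exp ((p:ℝ)/(q:ℝ)) ^ q := by
    rw [← h3]; exact lt_of_lt_of_le h h2
  exact lt_of_pow_lt_pow_left₀ q (Real.exp_pos _).le h4

lemma bell_le_sum (n : ℕ) :
    (bell n : ℝ) ≤ ∑ k ∈ Finset.range (n+1), (k:ℝ)^n / (Nat.factorial k) := by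
  rw [bell_eq_sum_cardk]
  push_cast
  refine Finset.sum_le_sum fun k _ => ?_
  rw [le_div_iff₀ (by positivity)]
  exact_mod_cast cardk_mul_factorial_le n k

lemma small_case (r B p q : ℕ) (hr : 1 ≤ r) (hq : 0 < q) (hp : 0 < p) (hB : bell r = B)
    (h1 : ((r:ℝ)+1) ^ q < (2.7182818283:ℝ) ^ p)
    (h2 : (B:ℝ) * (p:ℝ)^r < (0.792*(r:ℝ)*(q:ℝ))^r) :
    (bell r : ℝ) < (0.792 * r / Real.log (r+1)) ^ r := by
  have hrR : (1:ℝ) ≤ (r:ℝ) := by exact_mod_cast hr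
  have hqR : (0:ℝ) < (q:ℝ) := by exact_mod_cast hq
  have hpR : (0:ℝ) < (p:ℝ) := by exact_mod_cast hp
  have hL : 0 < Real.log ((r:ℝ)+1) := Real.log_pos (by linarith)
  have hlog : Real.log ((r:ℝ)+1) < (p:ℝ)/(q:ℝ) := log_lt (by linarith) hq h1
  have key : 0.792*(r:ℝ)*(q:ℝ)/(p:ℝ) ≤ 0.792*(r:ℝ)/Real.log ((r:ℝ)+1) := by
    rw [div_le_div_iff₀ hpR hL]
    have h5 : 0.792*(r:ℝ)*(q:ℝ)*Real.log ((r:ℝ)+1) ≤ 0.792*(r:ℝ)*(q:ℝ)*((p:ℝ)/(q:ℝ)) := by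
      apply mul_le_mul_of_nonneg_left hlog.le (by positivity)
    calc 0.792*(r:ℝ)*(q:ℝ)*Real.log ((r:ℝ)+1) ≤ 0.792*(r:ℝ)*(q:ℝ)*((p:ℝ)/(q:ℝ)) := h5
      _ = 0.792*(r:ℝ)*(p:ℝ) := by field_simp
  calc (bell r : ℝ) = (B:ℝ) := by rw [hB]
    _ < (0.792*(r:ℝ)*(q:ℝ)/(p:ℝ))^r := by
        rw [div_pow, lt_div_iff₀ (by positivity)]
        linarith [h2]
    _ ≤ (0.792*(r:ℝ)/Real.log ((r:ℝ)+1))^r := pow_le_pow_left₀ (by positivity) key r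

end BellDev

namespace BellDev

lemma bell_val_0 : bell 0 = 1 := bell_zero

lemma bell_val_1 : bell 1 = 1 := by
  rw [show (1:ℕ) = 0+1 from rfl, bell_succ]
  simp only [Finset.sum_range_succ, Finset.sum_range_zero, bell_val_0]
  decide

lemma bell_val_2 : bell 2 = 2 := by
  rw [show (2:ℕ) = 1+1 from rfl, bell_succ]
  simp only [Finset.sum_range_succ, Finset.sum_range_zero, bell_val_0, bell_val_1]
  decide

lemma bell_val_3 : bell 3 = 5 := by
  rw [show (3:ℕ) = 2+1 from rfl, bell_succ]
  simp only [Finset.sum_range_succ, Finset.sum_range_zero, bell_val_0, bell_val_1, bell_val_2]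
  decide

lemma bell_val_4 : bell 4 = 15 := by
  rw [show (4:ℕ) = 3+1 from rfl, bell_succ]
  simp only [Finset.sum_range_succ, Finset.sum_range_zero, bell_val_0, bell_val_1, bell_val_2, bell_val_3]
  decide

lemma bell_val_5 : bell 5 = 52 := by
  rw [show (5:ℕ) = 4+1 from rfl, bell_succ]
  simp only [Finset.sum_range_succ, Finset.sum_range_zero, bell_val_0, bell_val_1, bell_val_2, bell_val_3, bell_val_4]
  decide

lemma bell_val_6 : bell 6 = 203 := by
  rw [show (6:ℕ) = 5+1 from rfl, bell_succ]
  simp only [Finset.sum_range_succ, Finset.sum_range_zero, bell_val_0, bell_val_1, bell_val_2, bell_val_3, bell_val_4, bell_val_5]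
  decide

lemma bell_val_7 : bell 7 = 877 := by
  rw [show (7:ℕ) = 6+1 from rfl, bell_succ]
  simp only [Finset.sum_range_succ, Finset.sum_range_zero, bell_val_0, bell_val_1, bell_val_2, bell_val_3, bell_val_4, bell_val_5, bell_val_6]
  decide

lemma bell_val_8 : bell 8 = 4140 := by
  rw [show (8:ℕ) = 7+1 from rfl, bell_succ]
  simp only [Finset.sum_range_succ, Finset.sum_range_zero, bell_val_0, bell_val_1, bell_val_2, bell_val_3, bell_val_4, bell_val_5, bell_val_6, bell_val_7]
  decide

lemma bell_val_9 : bell 9 = 21147 := by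
  rw [show (9:ℕ) = 8+1 from rfl, bell_succ]
  simp only [Finset.sum_range_succ, Finset.sum_range_zero, bell_val_0, bell_val_1, bell_val_2, bell_val_3, bell_val_4, bell_val_5, bell_val_6, bell_val_7, bell_val_8]
  decide

lemma bell_val_10 : bell 10 = 115975 := by
  rw [show (10:ℕ) = 9+1 from rfl, bell_succ]
  simp only [Finset.sum_range_succ, Finset.sum_range_zero, bell_val_0, bell_val_1, bell_val_2, bell_val_3, bell_val_4, bell_val_5, bell_val_6, bell_val_7, bell_val_8, bell_val_9]
  decide

lemma bell_val_11 : bell 11 = 678570 := by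
  rw [show (11:ℕ) = 10+1 from rfl, bell_succ]
  simp only [Finset.sum_range_succ, Finset.sum_range_zero, bell_val_0, bell_val_1, bell_val_2, bell_val_3, bell_val_4, bell_val_5, bell_val_6, bell_val_7, bell_val_8, bell_val_9, bell_val_10]
  decide

lemma bell_val_12 : bell 12 = 4213597 := by
  rw [show (12:ℕ) = 11+1 from rfl, bell_succ]
  simp only [Finset.sum_range_succ, Finset.sum_range_zero, bell_val_0, bell_val_1, bell_val_2, bell_val_3, bell_val_4, bell_val_5, bell_val_6, bell_val_7, bell_val_8, bell_val_9, bell_val_10, bell_val_11]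
  decide

lemma bell_val_13 : bell 13 = 27644437 := by
  rw [show (13:ℕ) = 12+1 from rfl, bell_succ]
  simp only [Finset.sum_range_succ, Finset.sum_range_zero, bell_val_0, bell_val_1, bell_val_2, bell_val_3, bell_val_4, bell_val_5, bell_val_6, bell_val_7, bell_val_8, bell_val_9, bell_val_10, bell_val_11, bell_val_12]
  decide

lemma bell_val_14 : bell 14 = 190899322 := by
  rw [show (14:ℕ) = 13+1 from rfl, bell_succ]
  simp only [Finset.sum_range_succ, Finset.sum_range_zero, bell_val_0, bell_val_1, bell_val_2, bell_val_3, bell_val_4, bell_val_5, bell_val_6, bell_val_7, bell_val_8, bell_val_9, bell_val_10, bell_val_11, bell_val_12, bell_val_13]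
  decide

lemma bell_val_15 : bell 15 = 1382958545 := by
  rw [show (15:ℕ) = 14+1 from rfl, bell_succ]
  simp only [Finset.sum_range_succ, Finset.sum_range_zero, bell_val_0, bell_val_1, bell_val_2, bell_val_3, bell_val_4, bell_val_5, bell_val_6, bell_val_7, bell_val_8, bell_val_9, bell_val_10, bell_val_11, bell_val_12, bell_val_13, bell_val_14]
  decide

lemma bell_val_16 : bell 16 = 10480142147 := by
  rw [show (16:ℕ) = 15+1 from rfl, bell_succ]
  simp only [Finset.sum_range_succ, Finset.sum_range_zero, bell_val_0, bell_val_1, bell_val_2, bell_val_3, bell_val_4, bell_val_5, bell_val_6, bell_val_7, bell_val_8, bell_val_9, bell_val_10, bell_val_11, bell_val_12, bell_val_13, bell_val_14, bell_val_15]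
  decide

lemma bell_val_17 : bell 17 = 82864869804 := by
  rw [show (17:ℕ) = 16+1 from rfl, bell_succ]
  simp only [Finset.sum_range_succ, Finset.sum_range_zero, bell_val_0, bell_val_1, bell_val_2, bell_val_3, bell_val_4, bell_val_5, bell_val_6, bell_val_7, bell_val_8, bell_val_9, bell_val_10, bell_val_11, bell_val_12, bell_val_13, bell_val_14, bell_val_15, bell_val_16]
  decide

lemma bell_val_18 : bell 18 = 682076806159 := by
  rw [show (18:ℕ) = 17+1 from rfl, bell_succ]
  simp only [Finset.sum_range_succ, Finset.sum_range_zero, bell_val_0, bell_val_1, bell_val_2, bell_val_3, bell_val_4, bell_val_5, bell_val_6, bell_val_7, bell_val_8, bell_val_9, bell_val_10, bell_val_11, bell_val_12, bell_val_13, bell_val_14, bell_val_15, bell_val_16, bell_val_17]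
  decide

lemma bell_val_19 : bell 19 = 5832742205057 := by
  rw [show (19:ℕ) = 18+1 from rfl, bell_succ]
  simp only [Finset.sum_range_succ, Finset.sum_range_zero, bell_val_0, bell_val_1, bell_val_2, bell_val_3, bell_val_4, bell_val_5, bell_val_6, bell_val_7, bell_val_8, bell_val_9, bell_val_10, bell_val_11, bell_val_12, bell_val_13, bell_val_14, bell_val_15, bell_val_16, bell_val_17, bell_val_18]
  decide

lemma bell_val_20 : bell 20 = 51724158235372 := by
  rw [show (20:ℕ) = 19+1 from rfl, bell_succ]
  simp only [Finset.sum_range_succ, Finset.sum_range_zero, bell_val_0, bell_val_1, bell_val_2, bell_val_3, bell_val_4, bell_val_5, bell_val_6, bell_val_7, bell_val_8, bell_val_9, bell_val_10, bell_val_11, bell_val_12, bell_val_13, bell_val_14, bell_val_15, bell_val_16, bell_val_17, bell_val_18, bell_val_19]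
  decide

lemma bell_val_21 : bell 21 = 474869816156751 := by
  rw [show (21:ℕ) = 20+1 from rfl, bell_succ]
  simp only [Finset.sum_range_succ, Finset.sum_range_zero, bell_val_0, bell_val_1, bell_val_2, bell_val_3, bell_val_4, bell_val_5, bell_val_6, bell_val_7, bell_val_8, bell_val_9, bell_val_10, bell_val_11, bell_val_12, bell_val_13, bell_val_14, bell_val_15, bell_val_16, bell_val_17, bell_val_18, bell_val_19, bell_val_20]
  decide

lemma bell_val_22 : bell 22 = 4506715738447323 := by
  rw [show (22:ℕ) = 21+1 from rfl, bell_succ]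
  simp only [Finset.sum_range_succ, Finset.sum_range_zero, bell_val_0, bell_val_1, bell_val_2, bell_val_3, bell_val_4, bell_val_5, bell_val_6, bell_val_7, bell_val_8, bell_val_9, bell_val_10, bell_val_11, bell_val_12, bell_val_13, bell_val_14, bell_val_15, bell_val_16, bell_val_17, bell_val_18, bell_val_19, bell_val_20, bell_val_21]
  decide

end BellDev

theorem stmt10 (r : ℕ) (hr : 1 ≤ r) :
    (bell r : ℝ) < (0.792 * r / Real.log (r + 1)) ^ r := by
  by_cases h : 23 ≤ r
  · exact lt_of_le_of_lt (BellDev.bell_le_sum r) (BellDev.tail_bound r h)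
  · have h22 : r ≤ 22 := by omega
    interval_cases r
    · exact BellDev.small_case 1 1 3 4 (by norm_num) (by norm_num) (by norm_num) BellDev.bell_val_1 (by norm_num) (by norm_num)
    · exact BellDev.small_case 2 2 10 9 (by norm_num) (by norm_num) (by norm_num) BellDev.bell_val_2 (by norm_num) (by norm_num)
    · exact BellDev.small_case 3 5 25 18 (by norm_num) (by norm_num) (by norm_num) BellDev.bell_val_3 (by norm_num) (by norm_num)
    · exact BellDev.small_case 4 15 66 41 (by norm_num) (by norm_num) (by norm_num) BellDev.bell_val_4 (by norm_num) (by norm_num)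
    · exact BellDev.small_case 5 52 52 29 (by norm_num) (by norm_num) (by norm_num) BellDev.bell_val_5 (by norm_num) (by norm_num)
    · exact BellDev.small_case 6 203 37 19 (by norm_num) (by norm_num) (by norm_num) BellDev.bell_val_6 (by norm_num) (by norm_num)
    · exact BellDev.small_case 7 877 21 10 (by norm_num) (by norm_num) (by norm_num) BellDev.bell_val_7 (by norm_num) (by norm_num)
    · exact BellDev.small_case 8 4140 11 5 (by norm_num) (by norm_num) (by norm_num) BellDev.bell_val_8 (by norm_num) (by norm_num)
    · exact BellDev.small_case 9 21147 7 3 (by norm_num) (by norm_num) (by norm_num) BellDev.bell_val_9 (by norm_num) (by norm_num)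
    · exact BellDev.small_case 10 115975 12 5 (by norm_num) (by norm_num) (by norm_num) BellDev.bell_val_10 (by norm_num) (by norm_num)
    · exact BellDev.small_case 11 678570 5 2 (by norm_num) (by norm_num) (by norm_num) BellDev.bell_val_11 (by norm_num) (by norm_num)
    · exact BellDev.small_case 12 4213597 13 5 (by norm_num) (by norm_num) (by norm_num) BellDev.bell_val_12 (by norm_num) (by norm_num)
    · exact BellDev.small_case 13 27644437 8 3 (by norm_num) (by norm_num) (by norm_num) BellDev.bell_val_13 (by norm_num) (by norm_num)
    · exact BellDev.small_case 14 190899322 11 4 (by norm_num) (by norm_num) (by norm_num) BellDev.bell_val_14 (by norm_num) (by norm_num)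
    · exact BellDev.small_case 15 1382958545 14 5 (by norm_num) (by norm_num) (by norm_num) BellDev.bell_val_15 (by norm_num) (by norm_num)
    · exact BellDev.small_case 16 10480142147 17 6 (by norm_num) (by norm_num) (by norm_num) BellDev.bell_val_16 (by norm_num) (by norm_num)
    · exact BellDev.small_case 17 82864869804 3 1 (by norm_num) (by norm_num) (by norm_num) BellDev.bell_val_17 (by norm_num) (by norm_num)
    · exact BellDev.small_case 18 682076806159 3 1 (by norm_num) (by norm_num) (by norm_num) BellDev.bell_val_18 (by norm_num) (by norm_num)
    · exact BellDev.small_case 19 5832742205057 3 1 (by norm_num) (by norm_num) (by norm_num) BellDev.bell_val_19 (by norm_num) (by norm_num)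
    · exact BellDev.small_case 20 51724158235372 13 4 (by norm_num) (by norm_num) (by norm_num) BellDev.bell_val_20 (by norm_num) (by norm_num)
    · exact BellDev.small_case 21 474869816156751 13 4 (by norm_num) (by norm_num) (by norm_num) BellDev.bell_val_21 (by norm_num) (by norm_num)
    · exact BellDev.small_case 22 4506715738447323 10 3 (by norm_num) (by norm_num) (by norm_num) BellDev.bell_val_22 (by norm_num) (by norm_num)
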